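/- Let (t, s) be an affine point of E with s ≠ 0, and define ε₁(x, y) = (t·y − s·x)/(y − s) for affine points of E with y ≠ s. Then for any two affine points P = (x₁, y₁) and Q = (x₂, y₂) of E with y₁ ≠ s and y₂ ≠ s, one has ε₁(P) = ε₁(Q) if and only if Q = P or Q = −(P + (t, s)), where + is the group law of E and − is negation. In other words, ε₁ is 2:1 with fibers {P, i_{t₁}(P)}, where i_{t₁}(P) = −(P + (t, s)). -/

import Mathlib

/-- The elliptic curve `E : y² = x(x − 1)(x − λ)`, i.e. `y² = x³ − (1 + λ)x² + λx`,
in Weierstrass form. -/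
noncomputable def E (l : ℂ) : WeierstrassCurve.Affine ℂ :=
  { a₁ := 0, a₂ := -(1 + l), a₃ := 0, a₄ := l, a₆ := 0 }

open WeierstrassCurve.Affine

lemma some_eq_some_iff {W : WeierstrassCurve.Affine ℂ} {x₁ y₁ x₂ y₂ : ℂ}
    {h₁ : W.Nonsingular x₁ y₁} {h₂ : W.Nonsingular x₂ y₂} :
    (Point.some _ _ h₁ = Point.some _ _ h₂) ↔ (x₁ = x₂ ∧ y₁ = y₂) := by
  constructor
  · intro h
    exact ⟨congrArg (fun P => match P with | Point.some x _ _ => x | _ => 0) h,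
           congrArg (fun P => match P with | Point.some _ y _ => y | _ => 0) h⟩
  · rintro ⟨rfl, rfl⟩; rfl

lemma eqn_of_ns {l x y : ℂ} (h : (E l).Nonsingular x y) :
    y^2 = x^3 - (1+l)*x^2 + l*x := by
  have := h.1
  rw [WeierstrassCurve.Affine.equation_iff] at this
  simp only [E] at this
  linear_combination this

/-- Let `(t, s)` be an affine point of `E` with `s ≠ 0`, and define
`ε₁(x, y) = (t·y − s·x)/(y − s)` for affine points of `E` with `y ≠ s`. Then for any two
affine points `P = (x₁, y₁)` and `Q = (x₂, y₂)` of `E` with `y₁ ≠ s` and `y₂ ≠ s`, one has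
`ε₁(P) = ε₁(Q)` if and only if `Q = P` or `Q = −(P + (t, s))`, where `+` is the group law
of `E` and `−` is negation. In other words, `ε₁` is 2:1 with fibers `{P, i_{t₁}(P)}` where
`i_{t₁}(P) = −(P + (t, s))`. -/
theorem epsilon_one_two_to_one (l : ℂ) (hl0 : l ≠ 0) (hl1 : l ≠ 1)
    (t s : ℂ) (hs : s ≠ 0) (hT : (E l).Nonsingular t s)
    (x₁ y₁ x₂ y₂ : ℂ) (hy₁ : y₁ ≠ s) (hy₂ : y₂ ≠ s)
    (hP : (E l).Nonsingular x₁ y₁) (hQ : (E l).Nonsingular x₂ y₂) :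
    (t * y₁ - s * x₁) / (y₁ - s) = (t * y₂ - s * x₂) / (y₂ - s) ↔
      (WeierstrassCurve.Affine.Point.some _ _ hQ = WeierstrassCurve.Affine.Point.some _ _ hP ∨
        WeierstrassCurve.Affine.Point.some _ _ hQ =
          -(WeierstrassCurve.Affine.Point.some _ _ hP + WeierstrassCurve.Affine.Point.some _ _ hT)) := by
  have hy1s : y₁ - s ≠ 0 := sub_ne_zero.mpr hy₁
  have hy2s : y₂ - s ≠ 0 := sub_ne_zero.mpr hy₂
  have e1 := eqn_of_ns hP
  have e2 := eqn_of_ns hQ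
  have eT := eqn_of_ns hT
  rw [div_eq_div_iff hy1s hy2s]
  by_cases hx1t : x₁ = t
  · -- vertical case : P = -T, so P + T = 0
    subst hx1t
    have hy1 : y₁ = -s := by
      have h0 : (y₁ - s) * (y₁ + s) = 0 := by linear_combination e1 - eT
      have := (mul_eq_zero.mp h0).resolve_left hy1s
      linear_combination this
    subst hy1
    have hPT : Point.some _ _ hP + Point.some _ _ hT = 0 :=
      Point.add_of_Y_eq rfl (by simp [E, WeierstrassCurve.Affine.negY])
    rw [hPT, neg_zero]
    constructor
    · intro h
      have h2 : 2*s^2*(x₁ - x₂) = 0 := by linear_combination h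
      have h3 : x₂ = x₁ := by
        have h4 : (2:ℂ)*s^2 ≠ 0 := mul_ne_zero two_ne_zero (pow_ne_zero 2 hs)
        have h5 := mul_left_cancel₀ h4 (h2.trans (mul_zero ((2:ℂ)*s^2)).symm)
        linear_combination -h5
      subst h3
      have h0 : (y₂ - s) * (y₂ + s) = 0 := by linear_combination e2 - eT
      have hy2 : y₂ = -s := by
        have := (mul_eq_zero.mp h0).resolve_left hy2s
        linear_combination this
      exact Or.inl (some_eq_some_iff.mpr ⟨rfl, hy2⟩)
    · rintro (h | h)
      · obtain ⟨hx2, hy2⟩ := some_eq_some_iff.mp h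
        rw [hx2, hy2]
      · exact absurd h (by simp)
  · -- generic case
    have hd : x₁ - t ≠ 0 := sub_ne_zero.mpr hx1t
    have hadd : Point.some _ _ hP + Point.some _ _ hT =
        -Point.some _ _ ((E l).nonsingular_negAdd hP hT (fun h => absurd h.1 hx1t)) :=
      Point.add_of_X_ne' hx1t
    rw [hadd, neg_neg]
    set L := (E l).slope x₁ t y₁ s with hLdef
    have hslope : L = (y₁ - s)/(x₁ - t) := slope_of_X_ne hx1t
    have hL : L * (x₁ - t) = y₁ - s := by rw [hslope]; field_simp
    have hX3 : (E l).addX x₁ t L = L^2 + (1+l) - x₁ - t := by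
      simp [E, WeierstrassCurve.Affine.addX]; ring
    have hY3 : (E l).negAddY x₁ t y₁ L = L * ((E l).addX x₁ t L - x₁) + y₁ := rfl
    constructor
    · intro h
      have hdet : (y₂ - s)*(x₁ - t) = (y₁ - s)*(x₂ - t) :=
        mul_left_cancel₀ hs (by linear_combination -h)
      have hfac : (x₂-t)*((x₂-x₁)*((x₁-t)^2*(x₂+t+x₁-(1+l)) - (y₁-s)^2)) = 0 := by
        linear_combination (-(x₁-t)^2)*e2 + ((x₁-t)^2 - (x₁-t)*(x₂-t))*eT +
          (x₁-t)*(x₂-t)*e1 + ((x₁-t)*y₂ + s*(x₁-t) + (y₁-s)*(x₂-t))*hdet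
      rcases mul_eq_zero.mp hfac with h1 | h23
      · -- x₂ = t : contradiction
        exfalso
        have hx2 : x₂ = t := by linear_combination h1
        subst hx2
        have hy2 : y₂ = -s := by
          have h0 : (y₂ - s) * (y₂ + s) = 0 := by linear_combination e2 - eT
          have := (mul_eq_zero.mp h0).resolve_left hy2s
          linear_combination this
        subst hy2
        have : (-2*s)*(x₁ - x₂) = 0 := by linear_combination hdet
        rcases mul_eq_zero.mp this with h' | h'
        · exact hs (by linear_combination -h'/2)
        · exact hd h'
      rcases mul_eq_zero.mp h23 with h2 | h3
      · -- x₂ = x₁ : Q = P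
        have hx2 : x₂ = x₁ := by linear_combination h2
        left
        refine some_eq_some_iff.mpr ⟨hx2, ?_⟩
        rw [hx2] at hdet
        have := mul_right_cancel₀ hd hdet
        linear_combination this
      · -- Q = -(P + T)
        right
        have hx2 : x₂ = (E l).addX x₁ t L := by
          rw [hX3]
          have h0 : x₂*(x₁-t)^2 = (L^2 + (1+l) - x₁ - t)*(x₁-t)^2 := by
            linear_combination h3 - (L*(x₁-t) + (y₁-s))*hL
          exact mul_right_cancel₀ (pow_ne_zero 2 hd) h0
        refine some_eq_some_iff.mpr ⟨hx2, ?_⟩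
        have hy2' : y₂ = L*(x₂ - x₁) + y₁ := by
          have h0 : y₂*(x₁-t) = (L*(x₂-x₁)+y₁)*(x₁-t) := by
            linear_combination hdet - (x₂-x₁)*hL
          exact mul_right_cancel₀ hd h0
        rw [hY3, ← hx2]
        exact hy2'
    · rintro (h | h)
      · obtain ⟨hx2, hy2⟩ := some_eq_some_iff.mp h
        rw [hx2, hy2]
      · obtain ⟨hx2, hy2⟩ := some_eq_some_iff.mp h
        rw [hY3, ← hx2] at hy2
        have hdet : (y₂ - s)*(x₁ - t) = (y₁ - s)*(x₂ - t) := by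
          linear_combination (x₁-t)*hy2 + (x₂-x₁)*hL
        linear_combination (-s)*hdet
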